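/- Let n be a natural number, S a finite type, and ρ a PSD complex matrix indexed by (Fin n → S) which is permutation-invariant, i.e. ρ(x ∘ π, y ∘ π) = ρ(x, y) for every permutation π of Fin n and all x, y : Fin n → S. Then ρ has a permutation-symmetric purification: there exists a function ψ : (Fin n → S × S) → ℂ such that (i) ψ(w ∘ π) = ψ(w) for every permutation π of Fin n and every w : Fin n → S × S, and (ii) for all x, y : Fin n → S, ρ(x, y) = ∑_{z : Fin n → S} ψ(fun i ↦ (x i, z i)) · conj(ψ(fun i ↦ (y i, z i))). -/

import Mathlib

open Matrix Finset
open scoped ComplexOrder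

namespace Matrix.PosSemidef

open scoped MatrixOrder

variable {m : Type*} [Fintype m] [DecidableEq m] {M : Matrix m m ℂ}

noncomputable def sqrt (_hM : M.PosSemidef) : Matrix m m ℂ := CFC.sqrt M

lemma posSemidef_sqrt (hM : M.PosSemidef) : hM.sqrt.PosSemidef :=
  (CFC.sqrt_nonneg M).posSemidef

lemma sq_sqrt (hM : M.PosSemidef) : hM.sqrt ^ 2 = M :=
  CFC.sq_sqrt M hM.nonneg

lemma sqrt_mul_self (hM : M.PosSemidef) : hM.sqrt * hM.sqrt = M :=
  CFC.sqrt_mul_sqrt_self M hM.nonneg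

lemma eq_sqrt_of_sq_eq {B : Matrix m m ℂ} (hM : M.PosSemidef) (hB : B.PosSemidef)
    (h : M ^ 2 = B) : M = hB.sqrt := by
  unfold sqrt
  rw [eq_comm, CFC.sqrt_eq_iff B M hB.nonneg hM.nonneg, ← sq, h]

end Matrix.PosSemidef

/-- Every permutation-invariant PSD matrix on an `n`-partite system has a
permutation-symmetric purification on the doubled system. -/
theorem symmetric_purification
    {S : Type*} [Fintype S] [DecidableEq S] (n : ℕ)
    (ρ : Matrix (Fin n → S) (Fin n → S) ℂ) (hρ : ρ.PosSemidef)
    (hsym : ∀ (π : Equiv.Perm (Fin n)) (x y : Fin n → S), ρ (x ∘ π) (y ∘ π) = ρ x y) :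
    ∃ ψ : (Fin n → S × S) → ℂ,
      (∀ (π : Equiv.Perm (Fin n)) (w : Fin n → S × S), ψ (w ∘ π) = ψ w) ∧
      ∀ x y : Fin n → S, ρ x y =
        ∑ z : Fin n → S,
          ψ (fun i => (x i, z i)) * (starRingEnd ℂ) (ψ (fun i => (y i, z i))) := by
  set A := hρ.sqrt with hA
  have hAps := hρ.posSemidef_sqrt
  -- the square root is also permutation invariant
  have hAsym : ∀ (π : Equiv.Perm (Fin n)) (x y : Fin n → S), A (x ∘ π) (y ∘ π) = A x y := by
    intro π x y
    let e : (Fin n → S) ≃ (Fin n → S) := Equiv.piCongrLeft' (fun _ => S) π.symm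
    have he : ∀ x : Fin n → S, e x = x ∘ π := fun x => rfl
    have hsub : (A.submatrix e e).PosSemidef := hAps.submatrix e
    have hsq : (A.submatrix e e) ^ 2 = ρ := by
      rw [pow_two, submatrix_mul_equiv, ← pow_two, hρ.sq_sqrt]
      ext a b
      simp only [submatrix_apply, he]
      exact hsym π a b
    have := hsub.eq_sqrt_of_sq_eq hρ hsq
    have := congrFun (congrFun this x) y
    simpa [he] using this
  refine ⟨fun w => A (Prod.fst ∘ w) (Prod.snd ∘ w), ?_, ?_⟩
  · intro π w
    exact hAsym π (Prod.fst ∘ w) (Prod.snd ∘ w)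
  · intro x y
    have : ρ x y = (A * A) x y := by rw [hρ.sqrt_mul_self]
    rw [this, Matrix.mul_apply]
    refine Finset.sum_congr rfl fun z _ => ?_
    show A x z * A z y = A x z * (starRingEnd ℂ) (A y z)
    congr 1
    have := congrFun (congrFun hAps.isHermitian z) y
    simpa [Matrix.conjTranspose_apply] using this.symm
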